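/- (Directional derivatives via finite differences.) Let d ≥ r + s, b : {α ∈ ℕ³ : |α| = d} → ℝ, λ ∈ ℝ³ with λ₁+λ₂+λ₃ = 1, and k, l, n ∈ {1,2,3} with l ≠ k and n ≠ k. Set δ = ε_l − ε_k and η = ε_n − ε_k. Define g : ℝ² → ℝ by g(u,t) = Σ_{|α|=d} b(α) B_α^d(λ + uδ + tη). Then ∂^r_u ∂^s_t g at (0,0) equals Σ_{|α|=d−r−s} (d!/(d−r−s)!) (Δ_{kl}^r Δ_{kn}^s b)(α) B_α^{d−r−s}(λ), where the difference operator Δ_{ij} acts on coefficient arrays by (Δ_{ij} b)(α) = b(α + ε_j) − b(α + ε_i). -/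

import Mathlib

open Finset

/-- The trivariate Bernstein polynomial `B_a^d(l) = (d!/(a₁!a₂!a₃!)) l₁^{a₁} l₂^{a₂} l₃^{a₃}`. -/
noncomputable def Bern (d : ℕ) (a : Fin 3 → ℕ) (l : Fin 3 → ℝ) : ℝ :=
  ((Nat.factorial d : ℝ) /
      ((Nat.factorial (a 0) : ℝ) * (Nat.factorial (a 1) : ℝ) * (Nat.factorial (a 2) : ℝ))) *
    (l 0 ^ a 0 * l 1 ^ a 1 * l 2 ^ a 2)

/-- The `k`-th standard basis multi-index `ε_k` of `ℕ³`. -/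
def eps (k : Fin 3) : Fin 3 → ℕ := fun j => if j = k then 1 else 0

/-- The univariate Bernstein polynomial `B_k^n(t) = (n choose k) t^k (1-t)^{n-k}`
(automatically `0` when `k > n`). -/
noncomputable def bern1 (n k : ℕ) (t : ℝ) : ℝ :=
  (Nat.choose n k : ℝ) * t ^ k * (1 - t) ^ (n - k)

/-- The finite-difference operator `(Δ_{ij} b)(α) = b(α + ε_j) - b(α + ε_i)`
(here `Delta i j` is `Δ_{ij}`). -/
def Delta (i j : Fin 3) (c : (Fin 3 → ℕ) → ℝ) : (Fin 3 → ℕ) → ℝ :=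
  fun a => c (a + eps j) - c (a + eps i)


/-! ### Auxiliary definitions and lemmas -/

def etav (k n : Fin 3) : Fin 3 → ℝ :=
  fun i => (if i = n then (1 : ℝ) else 0) - (if i = k then 1 else 0)

noncomputable def Fb (e : ℕ) (c : (Fin 3 → ℕ) → ℝ) (x : Fin 3 → ℝ) : ℝ :=
  ∑ a ∈ Finset.Nat.antidiagonalTuple 3 e, c a * Bern e a x

def mono (x : Fin 3 → ℝ) (a : Fin 3 → ℕ) : ℝ := x 0 ^ a 0 * x 1 ^ a 1 * x 2 ^ a 2

lemma sum_shift (e : ℕ) (j : Fin 3) (g : (Fin 3 → ℕ) → ℝ) (hg : ∀ a, a j = 0 → g a = 0) :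
    ∑ a ∈ Finset.Nat.antidiagonalTuple 3 (e + 1), g a
      = ∑ β ∈ Finset.Nat.antidiagonalTuple 3 e, g (β + eps j) := by
  rw [← Finset.sum_filter_add_sum_filter_not _ (fun a => a j = 0)]
  have h1 : ∑ a ∈ (Finset.Nat.antidiagonalTuple 3 (e + 1)).filter (fun a => a j = 0), g a = 0 := by
    apply Finset.sum_eq_zero
    intro a ha
    exact hg a (Finset.mem_filter.mp ha).2
  rw [h1, zero_add]
  apply Finset.sum_nbij' (i := fun a => a - eps j) (j := fun β => β + eps j)
  · intro a ha
    simp only [Finset.mem_filter, Finset.Nat.mem_antidiagonalTuple, Fin.sum_univ_three] at ha ⊢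
    obtain ⟨h2, h3⟩ := ha
    simp only [Pi.sub_apply]
    fin_cases j <;> simp [eps] at h3 ⊢ <;> omega
  · intro β hβ
    simp only [Finset.mem_filter, Finset.Nat.mem_antidiagonalTuple, Fin.sum_univ_three] at hβ ⊢
    constructor
    · simp only [Pi.add_apply]
      fin_cases j <;> simp [eps] <;> omega
    · simp only [Pi.add_apply, eps]
      fin_cases j <;> simp
  · intro a ha
    simp only [Finset.mem_filter, Finset.Nat.mem_antidiagonalTuple, Fin.sum_univ_three] at ha
    funext i
    simp only [Pi.add_apply, Pi.sub_apply, eps]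
    rcases ha with ⟨h2, h3⟩
    by_cases hij : i = j <;> fin_cases j <;> simp_all <;> omega
  · intro β hβ
    funext i
    simp only [Pi.add_apply, Pi.sub_apply, eps]
    by_cases hij : i = j <;> simp [hij]
  · intro a ha
    simp only [Finset.mem_filter, Finset.Nat.mem_antidiagonalTuple] at ha
    congr 1
    funext i
    simp only [Pi.add_apply, Pi.sub_apply, eps]
    by_cases hij : i = j <;> simp [hij] <;> omega

lemma hasDerivAt_bern (e : ℕ) (a : Fin 3 → ℕ) (q η : Fin 3 → ℝ) (t : ℝ) :
    HasDerivAt (fun t => Bern e a (fun i => q i + t * η i))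
      (((e.factorial : ℝ)/(((a 0).factorial : ℝ) * ((a 1).factorial : ℝ) * ((a 2).factorial : ℝ))) *
        ((a 0 : ℝ) * η 0 * mono (fun i => q i + t * η i) (a - eps 0)
         + (a 1 : ℝ) * η 1 * mono (fun i => q i + t * η i) (a - eps 1)
         + (a 2 : ℝ) * η 2 * mono (fun i => q i + t * η i) (a - eps 2))) t := by
  have h : ∀ i : Fin 3, HasDerivAt (fun t : ℝ => q i + t * η i) (η i) t := by
    intro i
    simpa using ((hasDerivAt_id t).mul_const (η i)).const_add (q i)
  have h0 := ((h 0).pow (a 0)).mul ((h 1).pow (a 1))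
  have h1 := h0.mul ((h 2).pow (a 2))
  have h2 := h1.const_mul
    ((e.factorial : ℝ)/(((a 0).factorial : ℝ) * ((a 1).factorial : ℝ) * ((a 2).factorial : ℝ)))
  refine (show HasDerivAt (fun t => Bern e a (fun i => q i + t * η i)) _ t from h2).congr_deriv ?_
  have e0 : (a - eps 0) 0 = a 0 - 1 := by simp [eps]
  have e1 : (a - eps 0) 1 = a 1 := by simp [eps]
  have e2 : (a - eps 0) 2 = a 2 := by simp [eps]
  have f0 : (a - eps 1) 0 = a 0 := by simp [eps]
  have f1 : (a - eps 1) 1 = a 1 - 1 := by simp [eps]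
  have f2 : (a - eps 1) 2 = a 2 := by simp [eps]
  have g0 : (a - eps 2) 0 = a 0 := by simp [eps]
  have g1 : (a - eps 2) 1 = a 1 := by simp [eps]
  have g2 : (a - eps 2) 2 = a 2 - 1 := by simp [eps]
  simp only [mono, e0, e1, e2, f0, f1, f2, g0, g1, g2, Pi.pow_apply, Pi.mul_apply]
  ring

lemma shift_term (e : ℕ) (j : Fin 3) (c : (Fin 3 → ℕ) → ℝ) (x : Fin 3 → ℝ) (β : Fin 3 → ℕ) :
    c (β + eps j) * (((e+1).factorial : ℝ) /
        ((((β + eps j) 0).factorial : ℝ) * (((β + eps j) 1).factorial : ℝ) * (((β + eps j) 2).factorial : ℝ)))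
      * (((β + eps j) j : ℝ) * mono x ((β + eps j) - eps j))
    = ((e : ℝ) + 1) * (c (β + eps j) * Bern e β x) := by
  have hsub : (β + eps j) - eps j = β := by
    funext i
    simp only [Pi.add_apply, Pi.sub_apply, eps]
    by_cases hij : i = j <;> simp [hij]
  rw [hsub]
  have hb0 : ((β 0).factorial : ℝ) ≠ 0 := by positivity
  have hb1 : ((β 1).factorial : ℝ) ≠ 0 := by positivity
  have hb2 : ((β 2).factorial : ℝ) ≠ 0 := by positivity
  fin_cases j <;>
    (simp only [Pi.add_apply, eps, Bern, mono]
     simp [Nat.factorial_succ]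
     field_simp)

lemma hasDerivAt_Fb (e : ℕ) (c : (Fin 3 → ℕ) → ℝ) (k n : Fin 3) (hn : n ≠ k)
    (q : Fin 3 → ℝ) (t : ℝ) :
    HasDerivAt (fun t => Fb (e + 1) c (fun i => q i + t * etav k n i))
      (((e : ℝ) + 1) * Fb e (Delta k n c) (fun i => q i + t * etav k n i)) t := by
  have step : HasDerivAt (fun t => Fb (e + 1) c (fun i => q i + t * etav k n i))
      (∑ a ∈ Finset.Nat.antidiagonalTuple 3 (e + 1),
        c a * ((((e+1).factorial : ℝ)/(((a 0).factorial : ℝ) * ((a 1).factorial : ℝ) * ((a 2).factorial : ℝ))) *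
          ((a 0 : ℝ) * etav k n 0 * mono (fun i => q i + t * etav k n i) (a - eps 0)
           + (a 1 : ℝ) * etav k n 1 * mono (fun i => q i + t * etav k n i) (a - eps 1)
           + (a 2 : ℝ) * etav k n 2 * mono (fun i => q i + t * etav k n i) (a - eps 2)))) t := by
    unfold Fb
    exact HasDerivAt.fun_sum fun a _ => (hasDerivAt_bern (e+1) a q (etav k n) t).const_mul (c a)
  convert step using 1
  set x : Fin 3 → ℝ := fun i => q i + t * etav k n i with hx
  have Xdef : ∀ j : Fin 3,
      (∑ a ∈ Finset.Nat.antidiagonalTuple 3 (e + 1),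
        c a * ((((e+1).factorial : ℝ)/(((a 0).factorial : ℝ) * ((a 1).factorial : ℝ) * ((a 2).factorial : ℝ))) *
          ((a j : ℝ) * mono x (a - eps j))))
      = ((e : ℝ) + 1) * ∑ β ∈ Finset.Nat.antidiagonalTuple 3 e, c (β + eps j) * Bern e β x := by
    intro j
    rw [sum_shift e j _ (by intro a ha; simp [ha]), Finset.mul_sum]
    exact Finset.sum_congr rfl fun β _ => by
      have h := shift_term e j c x β; rw [← h]; ring
  have key : ((e : ℝ) + 1) * Fb e (Delta k n c) x
      = (∑ a ∈ Finset.Nat.antidiagonalTuple 3 (e + 1),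
          c a * ((((e+1).factorial : ℝ)/(((a 0).factorial : ℝ) * ((a 1).factorial : ℝ) * ((a 2).factorial : ℝ))) *
            ((a n : ℝ) * mono x (a - eps n))))
        - (∑ a ∈ Finset.Nat.antidiagonalTuple 3 (e + 1),
          c a * ((((e+1).factorial : ℝ)/(((a 0).factorial : ℝ) * ((a 1).factorial : ℝ) * ((a 2).factorial : ℝ))) *
            ((a k : ℝ) * mono x (a - eps k)))) := by
    rw [Xdef n, Xdef k]
    unfold Fb Delta
    rw [← mul_sub, ← Finset.sum_sub_distrib]
    congr 1
    exact Finset.sum_congr rfl fun β _ => by ring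
  rw [key, ← Finset.sum_sub_distrib]
  apply Finset.sum_congr rfl
  intro a _
  fin_cases k <;> fin_cases n <;> simp_all [etav] <;> ring

lemma Fb_const_mul (e : ℕ) (K : ℝ) (c : (Fin 3 → ℕ) → ℝ) (x : Fin 3 → ℝ) :
    Fb e (fun a => K * c a) x = K * Fb e c x := by
  unfold Fb
  rw [Finset.mul_sum]
  exact Finset.sum_congr rfl fun a _ => by ring

lemma Delta_const_mul (k n : Fin 3) (K : ℝ) (c : (Fin 3 → ℕ) → ℝ) :
    Delta k n (fun a => K * c a) = fun a => K * Delta k n c a := by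
  funext a; unfold Delta; ring

lemma Delta_iter_const_mul (k n : Fin 3) (s : ℕ) (K : ℝ) (c : (Fin 3 → ℕ) → ℝ) :
    (Delta k n)^[s] (fun a => K * c a) = fun a => K * (Delta k n)^[s] c a := by
  induction s generalizing c with
  | zero => rfl
  | succ s ih =>
    rw [Function.iterate_succ_apply, Function.iterate_succ_apply, Delta_const_mul, ih]

lemma iter_Fb (k n : Fin 3) (hn : n ≠ k) (s : ℕ) :
    ∀ (e : ℕ) (c : (Fin 3 → ℕ) → ℝ) (q : Fin 3 → ℝ),
    iteratedDeriv s (fun t => Fb (e + s) c (fun i => q i + t * etav k n i))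
      = fun t => (((e + s).factorial : ℝ) / (e.factorial : ℝ)) *
          Fb e ((Delta k n)^[s] c) (fun i => q i + t * etav k n i) := by
  induction s with
  | zero =>
    intro e c q
    funext t
    simp only [iteratedDeriv_zero, Nat.add_zero, Function.iterate_zero, id_eq]
    rw [div_self (by positivity : ((e.factorial : ℝ)) ≠ 0), one_mul]
  | succ s ih =>
    intro e c q
    rw [iteratedDeriv_succ']
    have hd : deriv (fun t => Fb (e + (s + 1)) c (fun i => q i + t * etav k n i))
        = fun t => Fb (e + s) (fun a => (((e + s : ℕ) : ℝ) + 1) * Delta k n c a)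
            (fun i => q i + t * etav k n i) := by
      funext t
      have h := (hasDerivAt_Fb (e + s) c k n hn q t).deriv
      rw [show e + (s + 1) = (e + s) + 1 from rfl, h, Fb_const_mul]
    rw [hd, ih]
    funext t
    rw [Delta_iter_const_mul, Fb_const_mul, ← Function.iterate_succ_apply]
    rw [show (e + (s + 1)).factorial = ((e + s) + 1) * (e + s).factorial from Nat.factorial_succ _]
    push_cast
    ring

theorem stmt10 (d r s : ℕ) (hrsd : r + s ≤ d) (b : (Fin 3 → ℕ) → ℝ)
    (l : Fin 3 → ℝ) (hl : l 0 + l 1 + l 2 = 1)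
    (k n m : Fin 3) (hn : n ≠ k) (hm : m ≠ k) :
    iteratedDeriv r
        (fun u : ℝ => iteratedDeriv s
          (fun t : ℝ => ∑ a ∈ Finset.Nat.antidiagonalTuple 3 d,
            b a * Bern d a (fun i => l i
              + u * ((if i = n then (1 : ℝ) else 0) - (if i = k then 1 else 0))
              + t * ((if i = m then (1 : ℝ) else 0) - (if i = k then 1 else 0)))) 0) 0 =
      ∑ a ∈ Finset.Nat.antidiagonalTuple 3 (d - r - s),
        ((Nat.factorial d : ℝ) / (Nat.factorial (d - r - s) : ℝ)) *
          ((Delta k n)^[r] ((Delta k m)^[s] b) a) *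
          Bern (d - r - s) a l := by
  have he : d = ((d - r - s) + r) + s := by omega
  set e := d - r - s with hedef
  -- Step 1: rewrite the inner iterated derivative
  have h1 : (fun u : ℝ => iteratedDeriv s
          (fun t : ℝ => ∑ a ∈ Finset.Nat.antidiagonalTuple 3 d,
            b a * Bern d a (fun i => l i
              + u * ((if i = n then (1 : ℝ) else 0) - (if i = k then 1 else 0))
              + t * ((if i = m then (1 : ℝ) else 0) - (if i = k then 1 else 0)))) 0)
      = fun u : ℝ => Fb (e + r)
          (fun a => (((e + r + s).factorial : ℝ) / (((e + r).factorial : ℝ))) *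
            ((Delta k m)^[s] b) a)
          (fun i => l i + u * etav k n i) := by
    funext u
    have hfun : (fun t : ℝ => ∑ a ∈ Finset.Nat.antidiagonalTuple 3 d,
            b a * Bern d a (fun i => l i
              + u * ((if i = n then (1 : ℝ) else 0) - (if i = k then 1 else 0))
              + t * ((if i = m then (1 : ℝ) else 0) - (if i = k then 1 else 0))))
        = fun t : ℝ => Fb ((e + r) + s) b
            (fun i => (l i + u * etav k n i) + t * etav k m i) := by
      rw [← he]
      rfl
    rw [hfun, iter_Fb k m hm s (e + r) b (fun i => l i + u * etav k n i)]
    have hpt : (fun i => (l i + u * etav k n i) + (0:ℝ) * etav k m i)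
        = fun i => l i + u * etav k n i := by
      funext i; ring
    beta_reduce
    rw [hpt, ← Fb_const_mul]
  rw [h1]
  -- Step 2: outer iterated derivative
  have h2 := iter_Fb k n hn r e
      (fun a => (((e + r + s).factorial : ℝ) / (((e + r).factorial : ℝ))) * ((Delta k m)^[s] b) a) l
  rw [h2]
  have hpt2 : (fun i => l i + (0:ℝ) * etav k n i) = l := by
    funext i; ring
  beta_reduce
  rw [hpt2, Delta_iter_const_mul, Fb_const_mul]
  have hfac : (((e + r).factorial : ℝ) / (e.factorial : ℝ)) *
      ((((e + r + s).factorial : ℝ) / (((e + r).factorial : ℝ))) )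
      = ((d.factorial : ℝ) / (e.factorial : ℝ)) := by
    rw [he]
    have h3 : (((e + r).factorial : ℝ)) ≠ 0 := by positivity
    have h4 : ((e.factorial : ℝ)) ≠ 0 := by positivity
    field_simp
  rw [← mul_assoc, hfac]
  unfold Fb
  rw [Finset.mul_sum]
  exact Finset.sum_congr rfl fun a _ => by ring
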